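/- arXiv:2110.11950 — 3 statements merged into one kernel-verified Lean document; each statement's English description precedes it below -/
import Mathlib

section
/- For every nonnegative ε, the function g(σ) = E_{z∼N(0,1)}[Φ(ε + σz) - Φ(σz)] is nonincreasing in σ > 0, where Φ is the standard normal cumulative distribution function. -/
open MeasureTheory ProbabilityTheory

/-- Standard normal CDF. -/
noncomputable def stdPhi (t : ℝ) : ℝ :=
  ∫ u in Set.Iic t, Real.exp (-u ^ 2 / 2) / Real.sqrt (2 * Real.pi)

open Real Set
open scoped NNReal ENNReal

noncomputable def phi (t : ℝ) : ℝ := Real.exp (-t ^ 2 / 2) / Real.sqrt (2 * Real.pi)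

lemma sqrt2pi_pos : 0 < Real.sqrt (2 * Real.pi) := Real.sqrt_pos.2 (by positivity)

lemma phi_nonneg (t : ℝ) : 0 ≤ phi t := by
  unfold phi; positivity

lemma phi_le (t : ℝ) : phi t ≤ (Real.sqrt (2 * Real.pi))⁻¹ := by
  unfold phi
  rw [div_eq_mul_inv]
  nth_rewrite 2 [← one_mul (Real.sqrt (2 * Real.pi))⁻¹]
  gcongr
  exact Real.exp_le_one_iff.mpr (by nlinarith [sq_nonneg t])

lemma phi_continuous : Continuous phi := by
  unfold phi; fun_prop

lemma phi_even (t : ℝ) : phi (-t) = phi t := by simp [phi]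

lemma phi_integrable : Integrable phi := by
  have h : Integrable (fun x : ℝ => Real.exp (-(1/2 : ℝ) * x ^ 2)) :=
    integrable_exp_neg_mul_sq (by norm_num)
  have : phi = fun x => Real.exp (-(1/2 : ℝ) * x ^ 2) / Real.sqrt (2 * Real.pi) := by
    funext x; unfold phi; ring_nf
  rw [this]
  exact h.div_const _

lemma integral_phi : ∫ t, phi t = 1 := by
  unfold phi
  rw [MeasureTheory.integral_div]
  have h1 : ∫ x : ℝ, Real.exp (-x ^ 2 / 2) = ∫ x : ℝ, Real.exp (-(1/2 : ℝ) * x ^ 2) := by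
    congr 1; funext x; ring_nf
  rw [h1, integral_gaussian]
  rw [show (Real.pi / (1/2 : ℝ)) = 2 * Real.pi by ring]
  rw [div_self sqrt2pi_pos.ne']

lemma stdPhi_eq (t : ℝ) : stdPhi t = ∫ u in Set.Iic t, phi u := rfl

lemma stdPhi_nonneg (t : ℝ) : 0 ≤ stdPhi t := by
  rw [stdPhi_eq]
  exact setIntegral_nonneg measurableSet_Iic fun u _ => phi_nonneg u

lemma stdPhi_le_one (t : ℝ) : stdPhi t ≤ 1 := by
  rw [stdPhi_eq, ← integral_phi]
  exact setIntegral_le_integral phi_integrable (Filter.Eventually.of_forall phi_nonneg)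

lemma stdPhi_mono : Monotone stdPhi := by
  intro a b hab
  rw [stdPhi_eq, stdPhi_eq]
  exact setIntegral_mono_set phi_integrable.integrableOn
    (Filter.Eventually.of_forall phi_nonneg)
    (HasSubset.Subset.eventuallyLE (Set.Iic_subset_Iic.2 hab))

lemma stdPhi_hasDerivAt (t : ℝ) : HasDerivAt stdPhi (phi t) t := by
  have heq : ∀ x : ℝ, stdPhi x = stdPhi 0 + ∫ u in (0:ℝ)..x, phi u := by
    intro x
    rw [stdPhi_eq, stdPhi_eq, ← intervalIntegral.integral_Iic_sub_Iic
      phi_integrable.integrableOn phi_integrable.integrableOn]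
    ring
  have h := (intervalIntegral.integral_hasDerivAt_right (a := (0:ℝ)) (b := t)
    (phi_integrable.intervalIntegrable)
    (phi_continuous.stronglyMeasurable.stronglyMeasurableAtFilter)
    phi_continuous.continuousAt).const_add (stdPhi 0)
  exact h.congr_of_eventuallyEq (Filter.Eventually.of_forall heq)

lemma stdPhi_continuous : Continuous stdPhi := by
  have : Differentiable ℝ stdPhi := fun t => (stdPhi_hasDerivAt t).differentiableAt
  exact this.continuous

lemma stdPhi_add_neg (t : ℝ) : stdPhi t + stdPhi (-t) = 1 := by
  have h1 : stdPhi (-t) = ∫ u in Set.Ioi t, phi u := by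
    rw [stdPhi_eq]
    have h2 := integral_comp_neg_Iic (-t) phi
    simp only [phi_even, neg_neg] at h2
    exact h2
  rw [stdPhi_eq, h1, ← integral_phi,
    ← setIntegral_union (Set.Iic_disjoint_Ioi le_rfl) measurableSet_Ioi
      phi_integrable.integrableOn phi_integrable.integrableOn,
    Set.Iic_union_Ioi, setIntegral_univ]

lemma stdPhi_zero : stdPhi 0 = 1/2 := by
  have := stdPhi_add_neg 0
  rw [neg_zero] at this
  linarith

lemma gaussianPDFReal_eq_phi : gaussianPDFReal 0 1 = phi := by
  funext x
  simp only [gaussianPDFReal, phi, NNReal.coe_one, mul_one, sub_zero]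
  ring

lemma integral_gauss (g : ℝ → ℝ) :
    ∫ z, g z ∂(gaussianReal 0 1) = ∫ z, phi z * g z := by
  rw [gaussianReal_of_var_ne_zero 0 one_ne_zero]
  have hd : (gaussianPDF 0 1) = fun x => ((Real.toNNReal (phi x) : ℝ≥0) : ℝ≥0∞) := by
    funext x
    rw [gaussianPDF, gaussianPDFReal_eq_phi]
    rfl
  rw [hd, integral_withDensity_eq_integral_smul
    (phi_continuous.measurable.real_toNNReal)]
  congr 1
  funext x
  rw [NNReal.smul_def, smul_eq_mul, Real.coe_toNNReal _ (phi_nonneg x)]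

lemma integral_phi_mul_phi (σ a : ℝ) :
    ∫ z, phi z * phi (a + σ * z) =
      phi (a / Real.sqrt (1 + σ ^ 2)) / Real.sqrt (1 + σ ^ 2) := by
  set s2 : ℝ := 1 + σ ^ 2 with hs2
  have hs2pos : 0 < s2 := by positivity
  have hspos : 0 < Real.sqrt s2 := Real.sqrt_pos.2 hs2pos
  have key : ∀ z : ℝ, phi z * phi (a + σ * z) =
      (Real.exp (-a ^ 2 / (2 * s2)) / (2 * Real.pi)) *
        Real.exp (-(s2 / 2) * (z + σ * a / s2) ^ 2) := by
    intro z
    simp only [phi]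
    rw [div_mul_div_comm, ← Real.exp_add, Real.mul_self_sqrt (by positivity),
      div_mul_eq_mul_div, ← Real.exp_add]
    congr 1
    rw [hs2]
    congr 1
    field_simp
    ring
  simp_rw [key]
  rw [MeasureTheory.integral_const_mul]
  have htrans : ∫ z : ℝ, Real.exp (-(s2 / 2) * (z + σ * a / s2) ^ 2)
      = ∫ z : ℝ, Real.exp (-(s2 / 2) * z ^ 2) :=
    integral_add_right_eq_self (fun z => Real.exp (-(s2 / 2) * z ^ 2)) (σ * a / s2)
  rw [htrans, integral_gaussian]
  have h1 : Real.sqrt (Real.pi / (s2 / 2)) = Real.sqrt (2 * Real.pi) / Real.sqrt s2 := by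
    rw [show Real.pi / (s2 / 2) = 2 * Real.pi / s2 by field_simp,
      Real.sqrt_div (by positivity)]
  have h2 : phi (a / Real.sqrt s2) = Real.exp (-a ^ 2 / (2 * s2)) / Real.sqrt (2 * Real.pi) := by
    simp only [phi, div_pow, Real.sq_sqrt hs2pos.le]
    congr 2
    field_simp
  have hsq : Real.sqrt (2 * Real.pi) * Real.sqrt (2 * Real.pi) = 2 * Real.pi :=
    Real.mul_self_sqrt (by positivity)
  rw [h1, h2]
  field_simp
  ring_nf
  rw [Real.sq_sqrt (by positivity)]

lemma integrable_stdPhi_comp (σ a : ℝ) :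
    Integrable (fun z => stdPhi (a + σ * z)) (gaussianReal 0 1) := by
  refine (integrable_const (1 : ℝ)).mono' ?_ ?_
  · exact (stdPhi_continuous.comp (by fun_prop : Continuous fun z : ℝ => a + σ * z)).aestronglyMeasurable
  · refine Filter.Eventually.of_forall fun z => ?_
    rw [Real.norm_eq_abs, abs_le]
    constructor
    · linarith [stdPhi_nonneg (a + σ * z)]
    · exact stdPhi_le_one _

lemma hasDerivAt_H (σ : ℝ) (a : ℝ) :
    HasDerivAt (fun x => ∫ z, stdPhi (x + σ * z) ∂(gaussianReal 0 1))
      (∫ z, phi (a + σ * z) ∂(gaussianReal 0 1)) a := by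
  have h := hasDerivAt_integral_of_dominated_loc_of_deriv_le
    (μ := gaussianReal 0 1)
    (F := fun x z => stdPhi (x + σ * z)) (F' := fun x z => phi (x + σ * z))
    (x₀ := a) (bound := fun _ => (Real.sqrt (2 * Real.pi))⁻¹) (s := Metric.ball a 1) (Metric.ball_mem_nhds a one_pos)
    (Filter.Eventually.of_forall fun x =>
      (stdPhi_continuous.comp (by fun_prop : Continuous fun z : ℝ => x + σ * z)).aestronglyMeasurable)
    (integrable_stdPhi_comp σ a)
    ((phi_continuous.comp (by fun_prop : Continuous fun z : ℝ => a + σ * z)).aestronglyMeasurable)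
    (Filter.Eventually.of_forall fun z x _ => by
      rw [Real.norm_eq_abs, abs_of_nonneg (phi_nonneg _)]
      exact phi_le _)
    (integrable_const _)
    (Filter.Eventually.of_forall fun z x _ => by
      have h1 := (stdPhi_hasDerivAt (x + σ * z)).comp x ((hasDerivAt_id x).add_const (σ * z))
      simpa [Function.comp_def] using h1)
  exact h.2

lemma H_zero (σ : ℝ) : ∫ z, stdPhi (σ * z) ∂(gaussianReal 0 1) = 1 / 2 := by
  rw [integral_gauss]
  have hint : Integrable (fun z => phi z * stdPhi (σ * z)) := by
    refine phi_integrable.mono' ?_ ?_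
    · exact (phi_continuous.mul (stdPhi_continuous.comp (by fun_prop))).aestronglyMeasurable
    · refine Filter.Eventually.of_forall fun z => ?_
      rw [Real.norm_eq_abs, abs_mul, abs_of_nonneg (phi_nonneg z),
        abs_of_nonneg (stdPhi_nonneg _)]
      calc phi z * stdPhi (σ * z) ≤ phi z * 1 := by
            gcongr
            · exact phi_nonneg z
            · exact stdPhi_le_one _
        _ = phi z := mul_one _
  have h2 : ∫ z, phi z * (1 - stdPhi (σ * z)) = ∫ z, phi z * stdPhi (σ * z) := by
    rw [← integral_neg_eq_self (fun z => phi z * stdPhi (σ * z)) volume]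
    congr 1
    funext z
    rw [show σ * -z = -(σ * z) by ring, phi_even]
    have h := stdPhi_add_neg (σ * z)
    rw [show stdPhi (-(σ * z)) = 1 - stdPhi (σ * z) by linarith]
  have h3 : ∫ z, phi z * (1 - stdPhi (σ * z)) = 1 - ∫ z, phi z * stdPhi (σ * z) := by
    simp_rw [mul_one_sub]
    rw [integral_sub phi_integrable hint, integral_phi]
  linarith

lemma integral_stdPhi_shift (σ : ℝ) (a : ℝ) :
    ∫ z, stdPhi (a + σ * z) ∂(gaussianReal 0 1)
      = stdPhi (a / Real.sqrt (1 + σ ^ 2)) := by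
  set s : ℝ := Real.sqrt (1 + σ ^ 2) with hs
  have hspos : 0 < s := Real.sqrt_pos.2 (by positivity)
  set H : ℝ → ℝ := fun x => ∫ z, stdPhi (x + σ * z) ∂(gaussianReal 0 1) with hH
  set K : ℝ → ℝ := fun x => stdPhi (x / s) with hK
  have hHderiv : ∀ x, HasDerivAt H (phi (x / s) / s) x := by
    intro x
    have h := hasDerivAt_H σ x
    rwa [integral_gauss, integral_phi_mul_phi σ x] at h
  have hKderiv : ∀ x, HasDerivAt K (phi (x / s) / s) x := by
    intro x
    have h := (stdPhi_hasDerivAt (x / s)).comp x ((hasDerivAt_id x).div_const s)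
    simpa [hK, div_eq_mul_inv, Function.comp_def] using h
  have hconst : H a - K a = H 0 - K 0 := by
    have hdiff : Differentiable ℝ (fun x => H x - K x) := fun x =>
      ((hHderiv x).sub (hKderiv x)).differentiableAt
    have hz : ∀ x, deriv (fun x => H x - K x) x = 0 := fun x => by
      exact ((hHderiv x).sub (hKderiv x)).deriv.trans (sub_self _)
    exact is_const_of_deriv_eq_zero hdiff hz a 0
  have hH0 : H 0 = 1 / 2 := by
    have := H_zero σ
    simp only [hH, zero_add]
    exact this
  have hK0 : K 0 = 1 / 2 := by
    simp only [hK, zero_div, stdPhi_zero]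
  have : H a = K a := by linarith
  exact this

/-- For every `ε ≥ 0`, `g(σ) = E_{z ∼ N(0,1)}[Φ(ε + σz) - Φ(σz)]` is nonincreasing
in `σ > 0`. -/
theorem gauss_smoothing_antitone (ε : ℝ) (hε : 0 ≤ ε) (σ₁ σ₂ : ℝ)
    (h₁ : 0 < σ₁) (h₂ : σ₁ ≤ σ₂) :
    (∫ z, (stdPhi (ε + σ₂ * z) - stdPhi (σ₂ * z)) ∂(gaussianReal 0 1)) ≤
    (∫ z, (stdPhi (ε + σ₁ * z) - stdPhi (σ₁ * z)) ∂(gaussianReal 0 1)) := by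
  have hsplit : ∀ σ : ℝ, (∫ z, (stdPhi (ε + σ * z) - stdPhi (σ * z)) ∂(gaussianReal 0 1))
      = stdPhi (ε / Real.sqrt (1 + σ ^ 2)) - 1 / 2 := by
    intro σ
    have hint2 : Integrable (fun z => stdPhi (σ * z)) (gaussianReal 0 1) := by
      simpa using integrable_stdPhi_comp σ 0
    rw [integral_sub (integrable_stdPhi_comp σ ε) hint2, integral_stdPhi_shift σ ε, H_zero σ]
  rw [hsplit σ₁, hsplit σ₂]
  have hle : ε / Real.sqrt (1 + σ₂ ^ 2) ≤ ε / Real.sqrt (1 + σ₁ ^ 2) := by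
    gcongr
  linarith [stdPhi_mono hle]
end

section
/- Consider the Gaussian mixture model where y = ±1 with probabilities π and 1−π, and x = Wz with z ∼ N(yμ, I_k) for a full column rank W ∈ R^{d×k}. The boundary risk of the Bayes-optimal classifier h*(x) = sign(xᵀ(WWᵀ)†Wμ − q/2), with q = log((1−π)/π), under ℓ₂ perturbations of radius ε satisfies BR(h*) ≤ ε/(√(2π)·σ_min(W)). -/
open MeasureTheory ProbabilityTheory Matrix

/-- Euclidean norm on ℝ^n. -/
noncomputable def l2Norm {n : ℕ} (u : Fin n → ℝ) : ℝ := Real.sqrt (∑ i, u i ^ 2)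

lemma l2Norm_nonneg {n : ℕ} (u : Fin n → ℝ) : 0 ≤ l2Norm u := Real.sqrt_nonneg _

lemma l2Norm_sq {n : ℕ} (u : Fin n → ℝ) : l2Norm u ^ 2 = ∑ i, u i ^ 2 := by
  rw [l2Norm, Real.sq_sqrt]; positivity

lemma l2Norm_eq_zero_iff {n : ℕ} (u : Fin n → ℝ) : l2Norm u = 0 ↔ u = 0 := by
  rw [l2Norm, Real.sqrt_eq_zero (by positivity)]
  constructor
  · intro h; funext i
    have := Finset.sum_eq_zero_iff_of_nonneg (fun i _ => sq_nonneg (u i)) |>.mp h i (Finset.mem_univ i)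
    simpa [pow_eq_zero_iff] using this
  · intro h; simp [h]

lemma dotProduct_le_l2Norm {n : ℕ} (a b : Fin n → ℝ) : a ⬝ᵥ b ≤ l2Norm a * l2Norm b := by
  have h1 : a ⬝ᵥ b ≤ |a ⬝ᵥ b| := le_abs_self _
  refine h1.trans ?_
  rw [← Real.sqrt_sq_eq_abs, l2Norm, l2Norm, ← Real.sqrt_mul (by positivity)]
  apply Real.sqrt_le_sqrt
  simpa [dotProduct] using Finset.sum_mul_sq_le_sq_mul_sq Finset.univ a b

lemma l2Norm_neg_sub {n : ℕ} (a b : Fin n → ℝ) : l2Norm (a - b) = l2Norm (b - a) := by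
  unfold l2Norm; congr 1; apply Finset.sum_congr rfl; intro i _
  simp [Pi.sub_apply]; ring

-- key: (W.mulVec z) ⬝ᵥ v = z ⬝ᵥ (Wᵀ.mulVec v)
lemma mulVec_dot {d k : ℕ} (W : Matrix (Fin d) (Fin k) ℝ) (z : Fin k → ℝ) (v : Fin d → ℝ) :
    (W.mulVec z) ⬝ᵥ v = z ⬝ᵥ (Wᵀ.mulVec v) := by
  rw [dotProduct_comm, dotProduct_mulVec, dotProduct_comm, mulVec_transpose]

lemma key_ineq {d k : ℕ} {W : Matrix (Fin d) (Fin k) ℝ} {σmin : ℝ} (hσ : 0 < σmin)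
    (hσW : ∀ u : Fin k → ℝ, σmin * l2Norm u ≤ l2Norm (W.mulVec u))
    {v : Fin d → ℝ} (hvcol : ∃ w : Fin k → ℝ, v = W.mulVec w) :
    σmin * l2Norm v ≤ l2Norm (Wᵀ.mulVec v) := by
  obtain ⟨w, rfl⟩ := hvcol
  set u := Wᵀ.mulVec (W.mulVec w)
  set nv := l2Norm (W.mulVec w) with hnv
  rcases eq_or_lt_of_le (l2Norm_nonneg (W.mulVec w)) with h0 | h0
  · show σmin * nv ≤ _
    rw [hnv, ← h0, mul_zero]; exact l2Norm_nonneg _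
  have h1 : nv ^ 2 = w ⬝ᵥ u := by
    rw [← mulVec_dot, l2Norm_sq]
    simp [dotProduct]; apply Finset.sum_congr rfl; intros; ring
  have h2 : w ⬝ᵥ u ≤ l2Norm w * l2Norm u := dotProduct_le_l2Norm w u
  have h3 : σmin * l2Norm w ≤ nv := hσW w
  have h4 : σmin * nv ^ 2 ≤ σmin * (l2Norm w * l2Norm u) := by
    rw [h1]; exact mul_le_mul_of_nonneg_left h2 hσ.le
  have h5 : σmin * l2Norm w * l2Norm u ≤ nv * l2Norm u :=
    mul_le_mul_of_nonneg_right h3 (l2Norm_nonneg u)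
  nlinarith [l2Norm_nonneg u]

lemma lintegral_vol_pi_prod : ∀ {n : ℕ} (f : Fin n → ℝ → ENNReal), (∀ i, Measurable (f i)) →
    ∫⁻ z : Fin n → ℝ, ∏ i, f i (z i) = ∏ i, ∫⁻ x : ℝ, f i x := by
  intro n
  induction n with
  | zero => intro f hf; simp [volume_pi, Measure.pi_empty_univ]
  | succ n ih =>
    intro f hf
    have h := ((measurePreserving_piFinSuccAbove (fun _ : Fin (n+1) => (volume : Measure ℝ)) 0).symm)
    rw [volume_pi, ← h.lintegral_comp_emb (MeasurableEquiv.measurableEmbedding _)]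
    simp_rw [MeasurableEquiv.piFinSuccAbove_symm_apply, Fin.insertNthEquiv,
      Fin.prod_univ_succ, Fin.insertNth_zero]
    simp only [Fin.zero_succAbove, Function.comp_def, Equiv.coe_fn_mk, Fin.cons_zero, Fin.cons_succ]
    simp only [cast_eq]
    rw [lintegral_prod_mul (f := f 0) (g := fun y : Fin n → ℝ => ∏ x : Fin n, f x.succ (y x))
      (hf 0).aemeasurable
      ((Finset.measurable_prod Finset.univ
        (fun i _ => (hf i.succ).comp (measurable_pi_apply i))).aemeasurable)]
    rw [← volume_pi, ih (fun i => f i.succ) (fun i => hf i.succ)]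

lemma pi_gauss_eq (k : ℕ) :
    (Measure.pi fun _ : Fin k => gaussianReal 0 1) =
      volume.withDensity (fun z : Fin k → ℝ => ∏ i, gaussianPDF 0 1 (z i)) := by
  refine Measure.pi_eq (fun s hs => ?_)
  rw [withDensity_apply _ (MeasurableSet.univ_pi hs), ← lintegral_indicator (MeasurableSet.univ_pi hs)]
  have : ∀ z : Fin k → ℝ, (Set.univ.pi s).indicator (fun z => ∏ i, gaussianPDF 0 1 (z i)) z
      = ∏ i, (s i).indicator (gaussianPDF 0 1) (z i) := by
    intro z
    by_cases hz : z ∈ Set.univ.pi s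
    · rw [Set.indicator_of_mem hz]
      refine (Finset.prod_congr rfl (fun i _ => ?_))
      rw [Set.indicator_of_mem (hz i (Set.mem_univ i))]
    · rw [Set.indicator_of_notMem hz]
      rw [Set.mem_pi] at hz
      push_neg at hz
      obtain ⟨i, -, hi⟩ := hz
      exact (Finset.prod_eq_zero (Finset.mem_univ i) (by rw [Set.indicator_of_notMem hi])).symm
  simp_rw [this]
  rw [lintegral_vol_pi_prod _ (fun i => (measurable_gaussianPDF 0 1).indicator (hs i))]
  refine Finset.prod_congr rfl (fun i _ => ?_)
  rw [lintegral_indicator (hs i), ← gaussianReal_apply 0 one_ne_zero (s i)]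

lemma map_withDensity_invariant {α : Type*} [MeasurableSpace α] {μ : Measure α} [SigmaFinite μ]
    {T : α → α} (hT : MeasurePreserving T μ μ) {F : α → ENNReal} (hF : Measurable F)
    (hFT : ∀ z, F (T z) = F z) :
    Measure.map T (μ.withDensity F) = μ.withDensity F := by
  ext s hs
  rw [Measure.map_apply hT.measurable hs, withDensity_apply _ (hT.measurable hs),
    withDensity_apply _ hs, ← lintegral_indicator (hT.measurable hs), ← lintegral_indicator hs]
  have : ∀ z, (T ⁻¹' s).indicator F z = s.indicator F (T z) := by
    intro z
    by_cases hz : T z ∈ s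
    · rw [Set.indicator_of_mem hz, Set.indicator_of_mem (by exact hz), hFT]
    · rw [Set.indicator_of_notMem hz, Set.indicator_of_notMem (by exact hz)]
  simp_rw [this]
  exact hT.lintegral_comp (hF.indicator hs)

lemma map_eval_pi_gauss {k : ℕ} (i₀ : Fin k) :
    Measure.map (fun z : Fin k → ℝ => z i₀) (Measure.pi fun _ : Fin k => gaussianReal 0 1)
      = gaussianReal 0 1 := by
  ext A hA
  rw [Measure.map_apply (measurable_pi_apply i₀) hA]
  have : (fun z : Fin k → ℝ => z i₀) ⁻¹' A
      = Set.univ.pi (Function.update (fun _ : Fin k => (Set.univ : Set ℝ)) i₀ A) := by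
    ext z
    simp only [Set.mem_preimage, Set.mem_pi, Set.mem_univ, forall_true_left]
    constructor
    · intro h i
      rcases eq_or_ne i i₀ with rfl | hne
      · simpa [Function.update] using h
      · simp [Function.update, hne]
    · intro h
      simpa [Function.update] using h i₀
  rw [this, Measure.pi_pi]
  rw [Finset.prod_eq_single i₀ (fun i _ hne => by simp [Function.update, hne]) (by simp)]
  simp [Function.update]

lemma map_dot_pi_gauss {k : ℕ} (u : Fin k → ℝ) (hu : u ≠ 0) :
    Measure.map (fun z : Fin k → ℝ => z ⬝ᵥ u) (Measure.pi fun _ : Fin k => gaussianReal 0 1)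
      = gaussianReal 0 ⟨(l2Norm u)^2, sq_nonneg _⟩ := by
  classical
  obtain ⟨i₀, hi₀⟩ : ∃ i, u i ≠ 0 := by
    by_contra h; push_neg at h; exact hu (funext h)
  set γ := (Measure.pi fun _ : Fin k => gaussianReal 0 1) with hγdef
  set e := (MeasurableEquiv.toLp 2 (Fin k → ℝ)).symm with he
  set uE : EuclideanSpace ℝ (Fin k) := (WithLp.equiv 2 (Fin k → ℝ)).symm u with huEdef
  have huEi : ∀ i, uE i = u i := fun i => rfl
  have hsumE : ∀ w : EuclideanSpace ℝ (Fin k), ∑ i, w i ^ 2 = ‖w‖ ^ 2 := by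
    intro w
    rw [EuclideanSpace.norm_eq, Real.sq_sqrt (by positivity)]
    exact Finset.sum_congr rfl fun i _ => by rw [Real.norm_eq_abs, sq_abs]
  have huEnorm : ‖uE‖ = l2Norm u := by
    rw [EuclideanSpace.norm_eq]; unfold l2Norm; congr 1
    exact Finset.sum_congr rfl fun i _ => by rw [huEi, Real.norm_eq_abs, sq_abs]
  have huE0 : uE ≠ 0 := by
    intro h; apply hi₀; rw [← huEi i₀, h]; rfl
  have hn0 : ‖uE‖ ≠ 0 := norm_ne_zero_iff.mpr huE0
  set unit : EuclideanSpace ℝ (Fin k) := ‖uE‖⁻¹ • uE with hunitdef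
  have hOrth : Orthonormal ℝ (Set.restrict {i₀} (fun _ : Fin k => unit)) := by
    refine ⟨fun i => ?_, fun i j hij => ?_⟩
    · show ‖unit‖ = 1
      rw [hunitdef, norm_smul, norm_inv, norm_norm, inv_mul_cancel₀ hn0]
    · exact absurd (Subtype.ext (i.2.trans j.2.symm)) hij
  obtain ⟨b, hb⟩ := Orthonormal.exists_orthonormalBasis_extension_of_card_eq
    (𝕜 := ℝ) (by simp [finrank_euclideanSpace]) hOrth
  have hbi₀ : b i₀ = unit := hb i₀ rfl
  set T : (Fin k → ℝ) → (Fin k → ℝ) := fun z => e (b.repr.symm (e.symm z)) with hTdef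
  have hTmp : MeasurePreserving T volume volume :=
    (EuclideanSpace.volume_preserving_symm_measurableEquiv_toLp (Fin k)).comp
      ((b.measurePreserving_repr_symm).comp
        (EuclideanSpace.volume_preserving_symm_measurableEquiv_toLp (Fin k)).symm)
  have hTz : ∀ z i, T z i = b.repr.symm ((WithLp.equiv 2 (Fin k → ℝ)).symm z) i := by
    intro z i; rfl
  have hsum : ∀ z : Fin k → ℝ, ∑ i, T z i ^ 2 = ∑ i, z i ^ 2 := by
    intro z
    simp_rw [hTz]
    rw [hsumE, LinearIsometryEquiv.norm_map, ← hsumE]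
    exact Finset.sum_congr rfl fun i _ => by rw [WithLp.equiv_symm_apply, PiLp.toLp_apply]
  have hdot : ∀ z : Fin k → ℝ, (T z) ⬝ᵥ u = l2Norm u * z i₀ := by
    intro z
    set w := b.repr.symm ((WithLp.equiv 2 (Fin k → ℝ)).symm z) with hwdef
    have h1 : (T z) ⬝ᵥ u = inner ℝ uE w := by
      rw [PiLp.inner_apply]
      unfold dotProduct
      refine Finset.sum_congr rfl fun i _ => ?_
      rw [hTz z i, ← hwdef, huEi]
      simp [RCLike.inner_apply, conj_trivial, mul_comm]
    have h2 : uE = ‖uE‖ • unit := by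
      rw [hunitdef, smul_smul, mul_inv_cancel₀ hn0, one_smul]
    rw [h1, h2, real_inner_smul_left, ← hbi₀, ← OrthonormalBasis.repr_apply_apply,
      hwdef, LinearIsometryEquiv.apply_symm_apply, WithLp.equiv_symm_apply, PiLp.toLp_apply, huEnorm]
  set F : (Fin k → ℝ) → ENNReal := fun z => ∏ i, gaussianPDF 0 1 (z i) with hFdef
  have hFform : ∀ z : Fin k → ℝ,
      F z = ENNReal.ofReal ((Real.sqrt (2 * Real.pi))⁻¹ ^ k
        * Real.exp (-(∑ i, z i ^ 2) / 2)) := by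
    intro z
    rw [hFdef]
    simp only [gaussianPDF_def]
    rw [← ENNReal.ofReal_prod_of_nonneg (fun i _ => gaussianPDFReal_nonneg 0 1 (z i))]
    congr 1
    simp only [gaussianPDFReal_def]
    rw [Finset.prod_mul_distrib, Finset.prod_const, Finset.card_univ, Fintype.card_fin,
      ← Real.exp_sum]
    congr 2
    · norm_num
    · simp only [sub_zero, NNReal.coe_one, mul_one]
      rw [← Finset.sum_div]
      rw [show (∑ x, -(z x)^2 : ℝ) = -∑ x, (z x)^2 by rw [Finset.sum_neg_distrib]]
  have hFT : ∀ z, F (T z) = F z := fun z => by rw [hFform, hFform, hsum z]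
  have hFmeas : Measurable F :=
    Finset.measurable_prod _ fun i _ => (measurable_gaussianPDF 0 1).comp (measurable_pi_apply i)
  have hγinv : Measure.map T γ = γ := by
    rw [hγdef, pi_gauss_eq]
    exact map_withDensity_invariant hTmp hFmeas hFT
  have hmdot : Measurable (fun z : Fin k → ℝ => z ⬝ᵥ u) :=
    Finset.measurable_sum _ fun i _ => by fun_prop
  calc Measure.map (fun z : Fin k → ℝ => z ⬝ᵥ u) γ
      = Measure.map (fun z : Fin k → ℝ => z ⬝ᵥ u) (Measure.map T γ) := by rw [hγinv]
    _ = Measure.map (fun z : Fin k → ℝ => (T z) ⬝ᵥ u) γ := by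
        rw [Measure.map_map hmdot hTmp.measurable]; rfl
    _ = Measure.map (fun z : Fin k → ℝ => l2Norm u * z i₀) γ := by
        congr 1; funext z; exact hdot z
    _ = Measure.map (fun x : ℝ => l2Norm u * x) (Measure.map (fun z : Fin k → ℝ => z i₀) γ) := by
        rw [Measure.map_map (measurable_const_mul (l2Norm u)) (measurable_pi_apply i₀)]; rfl
    _ = Measure.map (fun x : ℝ => l2Norm u * x) (gaussianReal 0 1) := by rw [map_eval_pi_gauss]
    _ = gaussianReal 0 ⟨(l2Norm u)^2, sq_nonneg _⟩ := by
        rw [gaussianReal_map_const_mul]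
        congr 1
        · ring
        · rw [mul_one]; rfl

lemma gaussianReal_Ico_le (m : ℝ) (V : NNReal) (hV : V ≠ 0) (a b : ℝ) :
    gaussianReal m V (Set.Ico a b)
      ≤ ENNReal.ofReal ((b - a) / Real.sqrt (2 * Real.pi * V)) := by
  rw [gaussianReal_apply m hV]
  have hb : ∀ x : ℝ, gaussianPDF m V x ≤ ENNReal.ofReal ((Real.sqrt (2 * Real.pi * V))⁻¹) := by
    intro x
    rw [gaussianPDF]
    apply ENNReal.ofReal_le_ofReal
    rw [gaussianPDFReal_def]
    calc (Real.sqrt (2 * Real.pi * V))⁻¹ * Real.exp (-(x - m) ^ 2 / (2 * V))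
        ≤ (Real.sqrt (2 * Real.pi * V))⁻¹ * 1 := by
          apply mul_le_mul_of_nonneg_left _ (by positivity)
          rw [Real.exp_le_one_iff]
          apply div_nonpos_of_nonpos_of_nonneg (neg_nonpos_of_nonneg (sq_nonneg _)) (by positivity)
      _ = (Real.sqrt (2 * Real.pi * V))⁻¹ := mul_one _
  calc ∫⁻ x in Set.Ico a b, gaussianPDF m V x
      ≤ ∫⁻ _ in Set.Ico a b, ENNReal.ofReal ((Real.sqrt (2 * Real.pi * V))⁻¹) :=
        lintegral_mono hb
    _ = ENNReal.ofReal ((Real.sqrt (2 * Real.pi * V))⁻¹) * volume (Set.Ico a b) :=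
        setLIntegral_const _ _
    _ = ENNReal.ofReal ((Real.sqrt (2 * Real.pi * V))⁻¹) * ENNReal.ofReal (b - a) := by
        rw [Real.volume_Ico]
    _ = ENNReal.ofReal ((b - a) / Real.sqrt (2 * Real.pi * V)) := by
        rw [← ENNReal.ofReal_mul (by positivity), div_eq_mul_inv, mul_comm]

/-- Gaussian mixture model with low-dimensional latent structure: `y = ±1` with
probabilities `π, 1-π`, and `x = Wz`, `z ∼ N(yμ, I_k)`. The boundary risk
(adversarial minus standard risk, for ℓ₂ perturbations of radius `ε`) of the
Bayes-optimal classifier `sign(xᵀ(WWᵀ)†Wμ - q/2)` is at most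
`ε/(√(2π) σ_min(W))`. -/
theorem gmm_boundary_risk_bound {d k : ℕ} (W : Matrix (Fin d) (Fin k) ℝ)
    (μ : Fin k → ℝ) (π' : ℝ) (hπ : π' ∈ Set.Ioo (0:ℝ) 1)
    (σmin : ℝ) (hσ : 0 < σmin)
    (hσW : ∀ u : Fin k → ℝ, σmin * l2Norm u ≤ l2Norm (W.mulVec u))
    -- `v = (WWᵀ)† Wμ`, characterized by `(WWᵀ)v = Wμ` and `v ∈ col(W)`:
    (v : Fin d → ℝ) (hv : (W * Wᵀ).mulVec v = W.mulVec μ)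
    (hvcol : ∃ w : Fin k → ℝ, v = W.mulVec w)
    (ε : ℝ) (hε : 0 ≤ ε)
    (P : Measure ((Fin d → ℝ) × ℝ))
    (hP : P = (ENNReal.ofReal π') •
        ((Measure.pi fun _ : Fin k => gaussianReal 0 1).map
          (fun z => (W.mulVec (μ + z), (1:ℝ)))) +
      (ENNReal.ofReal (1 - π')) •
        ((Measure.pi fun _ : Fin k => gaussianReal 0 1).map
          (fun z => (W.mulVec (-μ + z), (-1:ℝ)))))
    (hstar : (Fin d → ℝ) → ℝ)
    (hhstar : hstar = fun x =>
      if 0 ≤ x ⬝ᵥ v - Real.log ((1 - π') / π') / 2 then 1 else -1) :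
    P {p | ∃ x', l2Norm (x' - p.1) ≤ ε ∧ hstar x' * p.2 ≤ 0} -
      P {p | hstar p.1 * p.2 ≤ 0} ≤
    ENNReal.ofReal (ε / (Real.sqrt (2 * Real.pi) * σmin)) := by
  classical
  set q : ℝ := Real.log ((1 - π') / π') with hq
  set g : (Fin d → ℝ) → ℝ := fun x => x ⬝ᵥ v - q / 2 with hg
  set L : ℝ := ε * l2Norm v with hL
  set u : Fin k → ℝ := Wᵀ.mulVec v with hu
  set γ : Measure (Fin k → ℝ) := Measure.pi fun _ : Fin k => gaussianReal 0 1 with hγ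
  set B : Set ((Fin d → ℝ) × ℝ) :=
    {p | (0 < p.2 ∧ g p.1 ∈ Set.Ico 0 L) ∨ (p.2 < 0 ∧ g p.1 ∈ Set.Ico (-L) 0)} with hB
  have hstar_pos : ∀ x, 0 ≤ g x → hstar x = 1 := by
    intro x hx; rw [hhstar]; simp only [hg] at hx ⊢; rw [if_pos hx]
  have hstar_neg : ∀ x, ¬ 0 ≤ g x → hstar x = -1 := by
    intro x hx; rw [hhstar]; simp only [hg] at hx ⊢; rw [if_neg hx]
  have hvnn : 0 ≤ l2Norm v := l2Norm_nonneg v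
  -- inclusion
  have hAS : {p : (Fin d → ℝ) × ℝ | ∃ x', l2Norm (x' - p.1) ≤ ε ∧ hstar x' * p.2 ≤ 0}
      ⊆ {p | hstar p.1 * p.2 ≤ 0} ∪ B := by
    intro p hp
    by_cases hpS : hstar p.1 * p.2 ≤ 0
    · exact Or.inl hpS
    right
    push_neg at hpS
    obtain ⟨x', hx'd, hx'f⟩ := hp
    have hCS1 : (p.1 - x') ⬝ᵥ v < L ∨ (p.1 - x') ⬝ᵥ v ≤ L := by
      right
      calc (p.1 - x') ⬝ᵥ v ≤ l2Norm (p.1 - x') * l2Norm v := dotProduct_le_l2Norm _ _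
        _ = l2Norm (x' - p.1) * l2Norm v := by rw [l2Norm_neg_sub]
        _ ≤ ε * l2Norm v := mul_le_mul_of_nonneg_right hx'd hvnn
    have hCS : (p.1 - x') ⬝ᵥ v ≤ L := hCS1.elim le_of_lt id
    have hCS' : (x' - p.1) ⬝ᵥ v ≤ L :=
      calc (x' - p.1) ⬝ᵥ v ≤ l2Norm (x' - p.1) * l2Norm v := dotProduct_le_l2Norm _ _
        _ ≤ ε * l2Norm v := mul_le_mul_of_nonneg_right hx'd hvnn
    have hdiff : g p.1 - g x' = (p.1 - x') ⬝ᵥ v := by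
      simp only [hg, sub_dotProduct]; ring
    have hdiff' : g x' - g p.1 = (x' - p.1) ⬝ᵥ v := by
      simp only [hg, sub_dotProduct]; ring
    by_cases hgp : 0 ≤ g p.1
    · have h1 := hstar_pos p.1 hgp
      rw [h1, one_mul] at hpS
      have h2 : ¬ 0 ≤ g x' := by
        intro hgx
        rw [hstar_pos x' hgx, one_mul] at hx'f
        linarith
      push_neg at h2
      exact Or.inl ⟨hpS, hgp, by linarith⟩
    · have h1 := hstar_neg p.1 hgp
      rw [h1, neg_one_mul] at hpS
      have hy : p.2 < 0 := by linarith
      push_neg at hgp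
      have h2 : 0 ≤ g x' := by
        by_contra hgx
        rw [hstar_neg x' hgx, neg_one_mul] at hx'f
        linarith
      exact Or.inr ⟨hy, by linarith, hgp⟩
  -- measurability
  have hgm : Measurable g := by
    apply Measurable.sub_const
    exact Finset.measurable_sum _ fun i _ => by fun_prop
  have hBm : MeasurableSet B := by
    have : B = ((fun p : (Fin d → ℝ) × ℝ => p.2) ⁻¹' Set.Ioi 0
          ∩ (fun p : (Fin d → ℝ) × ℝ => g p.1) ⁻¹' Set.Ico 0 L)
        ∪ ((fun p : (Fin d → ℝ) × ℝ => p.2) ⁻¹' Set.Iio 0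
          ∩ (fun p : (Fin d → ℝ) × ℝ => g p.1) ⁻¹' Set.Ico (-L) 0) := by
      ext p
      simp only [hB, Set.mem_setOf_eq, Set.mem_union, Set.mem_inter_iff, Set.mem_preimage,
        Set.mem_Ioi, Set.mem_Iio]
    rw [this]
    exact ((measurable_snd measurableSet_Ioi).inter
        ((hgm.comp measurable_fst) measurableSet_Ico)).union
      ((measurable_snd measurableSet_Iio).inter
        ((hgm.comp measurable_fst) measurableSet_Ico))
  -- reduce to bounding P B
  suffices hPB : P B ≤ ENNReal.ofReal (ε / (Real.sqrt (2 * Real.pi) * σmin)) by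
    rw [tsub_le_iff_right]
    calc P {p | ∃ x', l2Norm (x' - p.1) ≤ ε ∧ hstar x' * p.2 ≤ 0}
        ≤ P ({p | hstar p.1 * p.2 ≤ 0} ∪ B) := measure_mono hAS
      _ ≤ P {p | hstar p.1 * p.2 ≤ 0} + P B := measure_union_le _ _
      _ ≤ P {p | hstar p.1 * p.2 ≤ 0} + ENNReal.ofReal (ε / (Real.sqrt (2 * Real.pi) * σmin)) :=
          add_le_add_right hPB _
      _ = ENNReal.ofReal (ε / (Real.sqrt (2 * Real.pi) * σmin))
          + P {p | hstar p.1 * p.2 ≤ 0} := add_comm _ _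
  -- case v = 0
  by_cases hv0 : v = 0
  · have hB0 : B = ∅ := by
      ext p
      simp [hB, hL, hv0, (l2Norm_eq_zero_iff (0 : Fin d → ℝ)).mpr rfl, Set.Ico_self]
    rw [hB0]
    simp
  -- v ≠ 0
  have hnv : 0 < l2Norm v := by
    rcases eq_or_lt_of_le hvnn with h | h
    · exact absurd ((l2Norm_eq_zero_iff v).mp h.symm) hv0
    · exact h
  have hkey : σmin * l2Norm v ≤ l2Norm u := key_ineq hσ hσW hvcol
  have hnu : 0 < l2Norm u := lt_of_lt_of_le (by positivity) hkey
  have hune : u ≠ 0 := by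
    intro h; rw [h] at hnu; rw [(l2Norm_eq_zero_iff (0 : Fin k → ℝ)).mpr rfl] at hnu; exact lt_irrefl _ hnu
  set V : NNReal := ⟨(l2Norm u)^2, sq_nonneg _⟩ with hV
  have hVne : V ≠ 0 := by
    intro h
    have : (l2Norm u)^2 = 0 := congrArg NNReal.toReal h
    nlinarith
  have hsqrtV : Real.sqrt (2 * Real.pi * V) = Real.sqrt (2 * Real.pi) * l2Norm u := by
    have : (V : ℝ) = (l2Norm u)^2 := rfl
    rw [this, Real.sqrt_mul (by positivity), Real.sqrt_sq hnu.le]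
  set R : ENNReal := ENNReal.ofReal (L / (Real.sqrt (2 * Real.pi) * l2Norm u)) with hR
  have hmdot : Measurable (fun z : Fin k → ℝ => z ⬝ᵥ u) :=
    Finset.measurable_sum _ fun i _ => by fun_prop
  have hslab : ∀ a : ℝ, γ ((fun z : Fin k → ℝ => z ⬝ᵥ u) ⁻¹' Set.Ico a (a + L)) ≤ R := by
    intro a
    rw [← Measure.map_apply hmdot measurableSet_Ico, hγ, map_dot_pi_gauss u hune]
    calc gaussianReal 0 V (Set.Ico a (a + L))
        ≤ ENNReal.ofReal ((a + L - a) / Real.sqrt (2 * Real.pi * V)) :=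
          gaussianReal_Ico_le 0 V hVne a (a + L)
      _ = R := by rw [hsqrtV, hR, add_sub_cancel_left]
  -- pushforward preimages
  have hmapgen : ∀ m : Fin k → ℝ, Measurable (fun z : Fin k → ℝ => W.mulVec (m + z)) := by
    intro m
    refine measurable_pi_lambda _ fun i => ?_
    show Measurable fun z : Fin k → ℝ => ∑ j, W i j * (m j + z j)
    exact Finset.measurable_sum _ fun j _ =>
      by fun_prop
  have hmap1 : Measurable (fun z : Fin k → ℝ => (W.mulVec (μ + z), (1:ℝ))) :=
    (hmapgen μ).prod measurable_const
  have hmap2 : Measurable (fun z : Fin k → ℝ => (W.mulVec (-μ + z), (-1:ℝ))) :=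
    (hmapgen (-μ)).prod measurable_const
  have hgW : ∀ (m z : Fin k → ℝ), g (W.mulVec (m + z)) = z ⬝ᵥ u + (m ⬝ᵥ u - q / 2) := by
    intro m z
    simp only [hg]
    rw [mulVec_dot, add_dotProduct]
    ring
  have hpre1 : (fun z : Fin k → ℝ => (W.mulVec (μ + z), (1:ℝ))) ⁻¹' B
      = (fun z : Fin k → ℝ => z ⬝ᵥ u) ⁻¹' Set.Ico (-(μ ⬝ᵥ u - q/2)) (-(μ ⬝ᵥ u - q/2) + L) := by
    ext z
    simp only [Set.mem_preimage, hB, Set.mem_setOf_eq, Set.mem_Ico, hgW μ z]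
    constructor
    · rintro (⟨-, h1, h2⟩ | ⟨h, -⟩)
      · constructor <;> linarith
      · linarith
    · rintro ⟨h1, h2⟩
      exact Or.inl ⟨one_pos, by linarith, by linarith⟩
  have hpre2 : (fun z : Fin k → ℝ => (W.mulVec (-μ + z), (-1:ℝ))) ⁻¹' B
      = (fun z : Fin k → ℝ => z ⬝ᵥ u) ⁻¹' Set.Ico (-L - ((-μ) ⬝ᵥ u - q/2)) (-L - ((-μ) ⬝ᵥ u - q/2) + L) := by
    ext z
    simp only [Set.mem_preimage, hB, Set.mem_setOf_eq, Set.mem_Ico, hgW (-μ) z]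
    constructor
    · rintro (⟨h, -⟩ | ⟨-, h1, h2⟩)
      · linarith
      · constructor <;> linarith
    · rintro ⟨h1, h2⟩
      refine Or.inr ⟨by norm_num, by linarith, by linarith⟩
  have hfinal : L / (Real.sqrt (2 * Real.pi) * l2Norm u) ≤ ε / (Real.sqrt (2 * Real.pi) * σmin) := by
    have hsq : 0 < Real.sqrt (2 * Real.pi) := Real.sqrt_pos.mpr (by positivity)
    rw [div_le_div_iff₀ (mul_pos hsq hnu) (mul_pos hsq hσ)]
    have h1 : (ε * Real.sqrt (2 * Real.pi)) * (σmin * l2Norm v)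
        ≤ (ε * Real.sqrt (2 * Real.pi)) * l2Norm u :=
      mul_le_mul_of_nonneg_left hkey (mul_nonneg hε hsq.le)
    rw [hL]
    nlinarith [h1]
  rw [hP]
  rw [Measure.add_apply, Measure.smul_apply, Measure.smul_apply, smul_eq_mul, smul_eq_mul,
    Measure.map_apply hmap1 hBm, Measure.map_apply hmap2 hBm, hpre1, hpre2]
  calc ENNReal.ofReal π' * γ ((fun z : Fin k → ℝ => z ⬝ᵥ u) ⁻¹'
          Set.Ico (-(μ ⬝ᵥ u - q/2)) (-(μ ⬝ᵥ u - q/2) + L))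
        + ENNReal.ofReal (1 - π') * γ ((fun z : Fin k → ℝ => z ⬝ᵥ u) ⁻¹'
          Set.Ico (-L - ((-μ) ⬝ᵥ u - q/2)) (-L - ((-μ) ⬝ᵥ u - q/2) + L))
      ≤ ENNReal.ofReal π' * R + ENNReal.ofReal (1 - π') * R :=
        add_le_add (mul_le_mul_right (hslab _) _) (mul_le_mul_right (hslab _) _)
    _ = (ENNReal.ofReal π' + ENNReal.ofReal (1 - π')) * R := (add_mul _ _ _).symm
    _ = R := by
        rw [← ENNReal.ofReal_add hπ.1.le (by linarith [hπ.2])]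
        norm_num
    _ ≤ ENNReal.ofReal (ε / (Real.sqrt (2 * Real.pi) * σmin)) :=
        ENNReal.ofReal_le_ofReal hfinal
end

section
/- Let ℓ : R → R≥0 be strictly decreasing, and consider the robust empirical risk R_n(θ) = (1/n) Σᵢ ℓ(yᵢxᵢᵀθ − ε‖θ‖₂) with ε > 0, where each xᵢ lies in the column space of a matrix W ∈ R^{d×k}. Then any minimizer θ̂ of R_n over R^d satisfies P_{Ker(Wᵀ)}(θ̂) = 0, i.e., θ̂ lies in the column space of W. -/
open Matrix

lemma l2Norm_eq_norm {m : ℕ} (u : EuclideanSpace ℝ (Fin m)) :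
    l2Norm (fun i => u i) = ‖u‖ := by
  simp only [l2Norm, EuclideanSpace.norm_eq, Real.norm_eq_abs, sq_abs]

lemma dot_eq_inner {m : ℕ} (u v : EuclideanSpace ℝ (Fin m)) :
    (fun i => u i) ⬝ᵥ (fun i => v i) = (inner ℝ u v : ℝ) := by
  simp [dotProduct, PiLp.inner_apply, RCLike.inner_apply, mul_comm]

/-- Any minimizer of the robust empirical risk
`R_n(θ) = (1/n) Σ ℓ(yᵢ xᵢᵀθ - ε‖θ‖₂)` over data lying in the column space of `W`
itself lies in the column space of `W` (its projection onto `Ker(Wᵀ)` vanishes). -/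
theorem robust_erm_in_column_space {d k n : ℕ} (hn : 0 < n)
    (W : Matrix (Fin d) (Fin k) ℝ) (z : Fin n → Fin k → ℝ) (y : Fin n → ℝ)
    (hy : ∀ i, y i = 1 ∨ y i = -1)
    (ℓ : ℝ → ℝ) (hℓpos : ∀ t, 0 ≤ ℓ t) (hℓ : StrictAnti ℓ)
    (ε : ℝ) (hε : 0 < ε) (θhat : Fin d → ℝ)
    (hmin : ∀ θ : Fin d → ℝ,
      (1 / n : ℝ) * ∑ i, ℓ (y i * ((W.mulVec (z i)) ⬝ᵥ θhat) - ε * l2Norm θhat) ≤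
      (1 / n : ℝ) * ∑ i, ℓ (y i * ((W.mulVec (z i)) ⬝ᵥ θ) - ε * l2Norm θ)) :
    ∃ α : Fin k → ℝ, θhat = W.mulVec α := by
  by_contra hcon
  set E := EuclideanSpace ℝ (Fin d) with hE
  let L : (Fin d → ℝ) ≃ₗ[ℝ] E := (WithLp.linearEquiv 2 ℝ (Fin d → ℝ)).symm
  let S : Submodule ℝ E := Submodule.map (L : (Fin d → ℝ) →ₗ[ℝ] E) (LinearMap.range W.mulVecLin)
  have hθnot : (L θhat) ∉ S := by
    intro h
    obtain ⟨v, ⟨α, hα⟩, hv⟩ := h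
    exact hcon ⟨α, by have := L.injective hv; rw [← this, ← hα]; rfl⟩
  set θ₁ : E := (S.orthogonalProjection (L θhat) : E) with hθ₁
  have hθ₁S : θ₁ ∈ S := (S.orthogonalProjection (L θhat)).2
  obtain ⟨v, ⟨α, hα⟩, hv⟩ := hθ₁S
  have hw : L θhat - θ₁ ∈ Sᗮ := S.sub_starProjection_mem_orthogonal (L θhat)
  have hwne : L θhat - θ₁ ≠ 0 := by
    intro h
    rw [sub_eq_zero] at h
    exact hθnot (h ▸ (S.orthogonalProjection (L θhat)).2)
  -- norm strict inequality
  have hinner : (inner ℝ θ₁ (L θhat - θ₁) : ℝ) = 0 :=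
    (Submodule.mem_orthogonal S _).1 hw θ₁ (S.orthogonalProjection (L θhat)).2
  have hnormlt : ‖θ₁‖ < ‖L θhat‖ := by
    have hdecomp : ‖L θhat‖ ^ 2 = ‖θ₁‖ ^ 2 + ‖L θhat - θ₁‖ ^ 2 := by
      have h1 := norm_add_sq_real θ₁ (L θhat - θ₁)
      rw [hinner] at h1
      have h2 : θ₁ + (L θhat - θ₁) = L θhat := by abel
      rw [h2] at h1
      linarith
    have hpos : 0 < ‖L θhat - θ₁‖ ^ 2 := pow_pos (norm_pos_iff.mpr hwne) 2
    nlinarith [norm_nonneg θ₁, norm_nonneg (L θhat)]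
  -- dot products agree for points in column space
  have hdot : ∀ i : Fin n, (W.mulVec (z i)) ⬝ᵥ θhat = (W.mulVec (z i)) ⬝ᵥ v := by
    intro i
    have hxS : L (W.mulVec (z i)) ∈ S := ⟨W.mulVec (z i), ⟨z i, rfl⟩, rfl⟩
    have h0 : (inner ℝ (L (W.mulVec (z i))) (L θhat - θ₁) : ℝ) = 0 :=
      (Submodule.mem_orthogonal S _).1 hw _ hxS
    have h1 : (inner ℝ (L (W.mulVec (z i))) (L θhat) : ℝ) = inner ℝ (L (W.mulVec (z i))) θ₁ := by
      have := inner_sub_right (𝕜 := ℝ) (L (W.mulVec (z i))) (L θhat) θ₁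
      rw [h0] at this
      linarith
    have e1 : (W.mulVec (z i)) ⬝ᵥ θhat = (inner ℝ (L (W.mulVec (z i))) (L θhat) : ℝ) :=
      dot_eq_inner (L (W.mulVec (z i))) (L θhat)
    have e2 : (W.mulVec (z i)) ⬝ᵥ v = (inner ℝ (L (W.mulVec (z i))) θ₁ : ℝ) := by
      rw [← hv]; exact dot_eq_inner (L (W.mulVec (z i))) (L v)
    rw [e1, e2, h1]
  -- norms in terms of l2Norm
  have hl2hat : l2Norm θhat = ‖L θhat‖ := l2Norm_eq_norm (L θhat)
  have hl2v : l2Norm v = ‖θ₁‖ := by rw [← hv]; exact l2Norm_eq_norm (L v)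
  -- contradiction with minimality
  have hlt : ∀ i : Fin n,
      ℓ (y i * ((W.mulVec (z i)) ⬝ᵥ v) - ε * l2Norm v) <
      ℓ (y i * ((W.mulVec (z i)) ⬝ᵥ θhat) - ε * l2Norm θhat) := by
    intro i
    apply hℓ
    rw [hdot i, hl2hat, hl2v]
    have : ε * ‖θ₁‖ < ε * ‖L θhat‖ := by exact mul_lt_mul_of_pos_left hnormlt hε
    linarith
  have hsum : ∑ i, ℓ (y i * ((W.mulVec (z i)) ⬝ᵥ v) - ε * l2Norm v) <
      ∑ i, ℓ (y i * ((W.mulVec (z i)) ⬝ᵥ θhat) - ε * l2Norm θhat) := by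
    apply Finset.sum_lt_sum_of_nonempty
    · exact Finset.univ_nonempty_iff.mpr (Fin.pos_iff_nonempty.mp hn)
    · intro i _; exact hlt i
  have hninv : (0:ℝ) < 1 / n := by positivity
  have := hmin v
  nlinarith
end
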